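/- Let K be a field, let B : ℤ → K satisfy B h ≠ 0 for all h, and suppose there are λ, μ ∈ K such that B(h−2)·B(h+3) = λ·B(h−1)·B(h+2) + μ·B(h)·B(h+1) for all h ∈ ℤ (i.e., B is a Somos 5 sequence). Then for every integer m ≥ 2 there exist constants a, b ∈ K such that B(h−m)·B(h+m+1) = a·B(h−1)·B(h+2) + b·B(h)·B(h+1) for all h ∈ ℤ; that is, a Somos 5 is a three-term Somos k for every odd k = 7, 9, 11, …. -/

import Mathlib

/-- Auxiliary: the numerator of the Somos-5 invariant. -/
def gAux {K : Type*} [Field K] (B : ℤ → K) (lam : K) (j : ℤ) : K :=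
  B (j-2) * B (j+1) * (B (j+1) * B (j+2)) + B (j-1) * B j * (B j * B (j+3)) +
    (B (j-1) * B (j+2))^2 + lam * (B j * B (j+1))^2

/-- Auxiliary: the denominator of the Somos-5 invariant. -/
def wAux {K : Type*} [Field K] (B : ℤ → K) (j : ℤ) : K :=
  (B (j-1) * B (j+2)) * (B j * B (j+1))

theorem somos5_is_somos_odd {K : Type*} [Field K] (B : ℤ → K)
    (hB : ∀ h : ℤ, B h ≠ 0) (lam mu : K)
    (hrec : ∀ h : ℤ, B (h - 2) * B (h + 3) =
      lam * (B (h - 1) * B (h + 2)) + mu * (B h * B (h + 1))) :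
    ∀ m : ℤ, 2 ≤ m → ∃ a b : K,
      ∀ h : ℤ, B (h - m) * B (h + m + 1) =
        a * (B (h - 1) * B (h + 2)) + b * (B h * B (h + 1)) := by
  have hwne : ∀ j : ℤ, wAux B j ≠ 0 := fun j =>
    mul_ne_zero (mul_ne_zero (hB _) (hB _)) (mul_ne_zero (hB _) (hB _))
  have gstep : ∀ j : ℤ, gAux B lam (j+1) * wAux B j = gAux B lam j * wAux B (j+1) := by
    intro j
    have e1 := hrec j
    have e2 := hrec (j+1)
    rw [show j+1-2 = j-1 by ring, show j+1+3 = j+4 by ring, show j+1-1 = j by ring,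
      show j+1+2 = j+3 by ring, show j+1+1 = j+2 by ring] at e2
    simp only [gAux, wAux]
    rw [show j+1-2 = j-1 by ring, show j+1+1 = j+2 by ring, show j+1+2 = j+3 by ring,
      show j+1-1 = j by ring, show j+1+3 = j+4 by ring]
    linear_combination (-(B j * B (j+1)^3 * B (j+2)^2)) * e1 +
      (B j^2 * B (j+1)^3 * B (j+2)) * e2
  have hgw : ∀ j : ℤ, gAux B lam j * wAux B 0 = gAux B lam 0 * wAux B j := by
    intro j
    induction j using Int.induction_on with
    | zero => rfl
    | succ k ih =>
      have hs := gstep (k:ℤ)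
      apply mul_right_cancel₀ (hwne (k:ℤ))
      calc gAux B lam ((k:ℤ)+1) * wAux B 0 * wAux B (k:ℤ)
          = (gAux B lam ((k:ℤ)+1) * wAux B (k:ℤ)) * wAux B 0 := by ring
        _ = (gAux B lam (k:ℤ) * wAux B ((k:ℤ)+1)) * wAux B 0 := by rw [hs]
        _ = (gAux B lam (k:ℤ) * wAux B 0) * wAux B ((k:ℤ)+1) := by ring
        _ = (gAux B lam 0 * wAux B (k:ℤ)) * wAux B ((k:ℤ)+1) := by rw [ih]
        _ = gAux B lam 0 * wAux B ((k:ℤ)+1) * wAux B (k:ℤ) := by ring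
    | pred k ih =>
      have hs := gstep (-(k:ℤ)-1)
      rw [show -(k:ℤ)-1+1 = -(k:ℤ) by ring] at hs
      apply mul_right_cancel₀ (hwne (-(k:ℤ)))
      calc gAux B lam (-(k:ℤ)-1) * wAux B 0 * wAux B (-(k:ℤ))
          = (gAux B lam (-(k:ℤ)-1) * wAux B (-(k:ℤ))) * wAux B 0 := by ring
        _ = (gAux B lam (-(k:ℤ)) * wAux B (-(k:ℤ)-1)) * wAux B 0 := by rw [hs]
        _ = (gAux B lam (-(k:ℤ)) * wAux B 0) * wAux B (-(k:ℤ)-1) := by ring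
        _ = (gAux B lam 0 * wAux B (-(k:ℤ))) * wAux B (-(k:ℤ)-1) := by rw [ih]
        _ = gAux B lam 0 * wAux B (-(k:ℤ)-1) * wAux B (-(k:ℤ)) := by ring
  obtain ⟨I, hJ⟩ : ∃ I : K, ∀ j : ℤ, gAux B lam j = I * wAux B j := by
    refine ⟨gAux B lam 0 / wAux B 0, fun j => ?_⟩
    rw [div_mul_eq_mul_div, eq_div_iff (hwne 0)]
    linear_combination hgw j
  -- main induction on n
  have main : ∀ n : ℕ, ∃ a' b' a b : K,
      (∀ h : ℤ, B (h - (n:ℤ)) * B (h + (n:ℤ) + 1) =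
        a' * (B (h-1) * B (h+2)) + b' * (B h * B (h+1))) ∧
      (∀ h : ℤ, B (h - ((n:ℤ)+1)) * B (h + (n:ℤ) + 2) =
        a * (B (h-1) * B (h+2)) + b * (B h * B (h+1))) ∧
      mu*a'^2*a^2 - lam*a'^2*(a*b) - lam*(a'*b')*a^2 - I*(a'*b')*(a*b)
        - (a'*b')*b^2 - (a*b)*b'^2 = 0 := by
    intro n
    induction n with
    | zero =>
      refine ⟨0, 1, 1, 0, fun h => ?_, fun h => ?_, by ring⟩
      · push_cast
        rw [show h - (0:ℤ) = h by ring, show h + (0:ℤ) + 1 = h + 1 by ring]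
        ring
      · push_cast
        rw [show h + (0:ℤ) + 2 = h + 2 by ring]
        ring
    | succ n ih =>
      obtain ⟨a', b', a, b, hv0, hv1, hphi⟩ := ih
      obtain ⟨a'', b'', ca, cm, cc, hphi'⟩ :
          ∃ a'' b'' : K, a' * a'' = -(a*b) ∧
            a''*b' + a'*b'' = lam*a^2 + I*(a*b) + b^2 ∧
            b' * b'' = mu*a^2 - lam*(a*b) ∧
            mu*a^2*a''^2 - lam*a^2*(a''*b'') - lam*(a*b)*a''^2 - I*(a*b)*(a''*b'')
              - (a*b)*b''^2 - (a''*b'')*b^2 = 0 := by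
        by_cases ha' : a' = 0
        · have hb' : b' ≠ 0 := by
            intro hb0
            have h1 := hv0 0
            rw [ha', hb0] at h1
            simp at h1
            rcases h1 with h1 | h1 <;> exact hB _ h1
          have hab : a * b = 0 := by
            rw [ha'] at hphi
            have h2 : (a*b) * b'^2 = 0 := by linear_combination -hphi
            exact (mul_eq_zero.mp h2).resolve_right (pow_ne_zero 2 hb')
          refine ⟨(lam*a^2 + I*(a*b) + b^2)/b', (mu*a^2 - lam*(a*b))/b', ?_, ?_, ?_, ?_⟩
          · rw [ha', hab]; ring
          · rw [ha']; field_simp; ring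
          · field_simp
          · rcases mul_eq_zero.mp hab with h0 | h0 <;> rw [h0] <;> field_simp <;> ring
        · set A2 : K := -(a*b)/a' with hA2
          set B2 : K := ((lam*a^2 + I*(a*b) + b^2)*a' + (a*b)*b')/a'^2 with hB2
          have e1 : A2 * a' = -(a*b) := by rw [hA2]; field_simp
          have e2 : B2 * a'^2 = (lam*a^2 + I*(a*b) + b^2)*a' + (a*b)*b' := by
            rw [hB2]; field_simp
          refine ⟨A2, B2, ?_, ?_, ?_, ?_⟩
          · linear_combination e1
          · apply mul_left_cancel₀ (pow_ne_zero 2 ha')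
            linear_combination (a'*b')*e1 + a'*e2
          · apply mul_left_cancel₀ (pow_ne_zero 2 ha')
            linear_combination b'*e2 - hphi
          · apply mul_left_cancel₀ (pow_ne_zero 4 ha')
            linear_combination (a^2*b^2)*hphi
              + (lam*a'^2*a^2*b^2 - mu*a'^2*a^3*b - B2*a'^3*b^2 - I*(B2*a'^3*(a*b))
                - lam*(B2*a'^3*a^2) - lam*(A2*a'^3*(a*b)) + mu*(A2*a'^3*a^2))*e1
              + (-(b'*a^2*b^2) - B2*a'^2*(a*b))*e2
      refine ⟨a, b, a'', b'', fun h => ?_, fun h => ?_, hphi'⟩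
      · push_cast
        rw [show h + ((n:ℤ)+1) + 1 = h + (n:ℤ) + 2 by ring]
        exact hv1 h
      · push_cast
        have A1 := hv1 (h-1)
        rw [show h-1-((n:ℤ)+1) = h-((n:ℤ)+2) by ring, show h-1+(n:ℤ)+2 = h+(n:ℤ)+1 by ring,
          show h-1-1 = h-2 by ring, show h-1+2 = h+1 by ring, show h-1+1 = h by ring] at A1
        have A2 := hv1 (h+1)
        rw [show h+1-((n:ℤ)+1) = h-(n:ℤ) by ring, show h+1+(n:ℤ)+2 = h+(n:ℤ)+3 by ring,
          show h+1-1 = h by ring, show h+1+2 = h+3 by ring, show h+1+1 = h+2 by ring] at A2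
        have A0 := hv0 h
        have hJh := hJ h
        simp only [gAux, wAux] at hJh
        have hne : B (h - (n:ℤ)) * B (h + (n:ℤ) + 1) ≠ 0 := mul_ne_zero (hB _) (hB _)
        apply mul_right_cancel₀ hne
        calc B (h - ((n:ℤ)+1+1)) * B (h + ((n:ℤ)+1) + 2) * (B (h - (n:ℤ)) * B (h + (n:ℤ) + 1))
            = (B (h - ((n:ℤ)+2)) * B (h + (n:ℤ)+1)) * (B (h - (n:ℤ)) * B (h + (n:ℤ)+3)) := by
              rw [show h - ((n:ℤ)+1+1) = h - ((n:ℤ)+2) by ring,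
                show h + ((n:ℤ)+1) + 2 = h + (n:ℤ) + 3 by ring]
              ring
          _ = (a*(B (h-2)*B (h+1)) + b*(B (h-1)*B h)) *
              (a*(B h*B (h+3)) + b*(B (h+1)*B (h+2))) := by rw [A1, A2]
          _ = (a''*(B (h-1)*B (h+2)) + b''*(B h*B (h+1))) *
              (a'*(B (h-1)*B (h+2)) + b'*(B h*B (h+1))) := by
              linear_combination (a^2*(B h*B (h+1)))*(hrec h) + (a*b)*hJh
                - (B (h-1)*B (h+2))^2*ca
                - ((B (h-1)*B (h+2))*(B h*B (h+1)))*cm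
                - (B h*B (h+1))^2*cc
          _ = (a''*(B (h-1)*B (h+2)) + b''*(B h*B (h+1))) *
              (B (h - (n:ℤ)) * B (h + (n:ℤ) + 1)) := by rw [A0]
  intro m hm
  obtain ⟨a', b', a, b, _, hv1, _⟩ := main (m-1).toNat
  refine ⟨a, b, fun h => ?_⟩
  have hc : (((m-1).toNat : ℕ) : ℤ) = m - 1 := Int.toNat_of_nonneg (by omega)
  rw [hc] at hv1
  have hx := hv1 h
  rw [show h - ((m-1)+1) = h - m by ring, show h + (m-1) + 2 = h + m + 1 by ring] at hx
  exact hx
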